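/- Let V be the n × (L+1) Vandermonde matrix V_{k,ℓ} = x_k^ℓ (ℓ = 0, …, L, L ≥ n) with pairwise distinct x_k, and let W = P V for an invertible n×n matrix P. If Z_L and Z_H denote the submatrices of W obtained by deleting the last and first columns respectively, then Z_H Z_L^+ = P diag(x_1, …, x_n) P^{-1}, where Z_L^+ is the Moore–Penrose pseudoinverse; in particular the eigenvalues of Z_H Z_L^+ are exactly x_1, …, x_n. -/
import Mathlib


open Matrix

/-- `Zp` is a Moore–Penrose pseudoinverse of `Z` (the four Penrose conditions). -/
def IsMoorePenrose {α β : Type*} [Fintype α] [Fintype β] [DecidableEq α] [DecidableEq β]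
    (Z : Matrix α β ℂ) (Zp : Matrix β α ℂ) : Prop :=
  Z * Zp * Z = Z ∧ Zp * Z * Zp = Zp ∧ (Z * Zp)ᴴ = Z * Zp ∧ (Zp * Z)ᴴ = Zp * Z

/-- Let `V` be the `n × (L+1)` Vandermonde matrix `V_{k,ℓ} = x_k^ℓ` with `L ≥ n`
and pairwise distinct `x_k`, and `W = P V` with `P` invertible.  If `Z_L` and
`Z_H` are `W` without its last and first columns respectively, then
`Z_H Z_L⁺ = P diag(x) P⁻¹`; in particular the spectrum of `Z_H Z_L⁺` is exactly
`{x_1, …, x_n}`. -/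
theorem esprit_shift_identity (n L : ℕ) (hL : n ≤ L)
    (x : Fin n → ℂ) (hx : Function.Injective x)
    (P : Matrix (Fin n) (Fin n) ℂ) (hP : IsUnit P)
    (W : Matrix (Fin n) (Fin (L + 1)) ℂ)
    (hW : W = P * Matrix.of (fun (k : Fin n) (ℓ : Fin (L + 1)) => x k ^ (ℓ : ℕ)))
    (ZL ZH : Matrix (Fin n) (Fin L) ℂ)
    (hZL : ∀ k ℓ, ZL k ℓ = W k ℓ.castSucc)
    (hZH : ∀ k ℓ, ZH k ℓ = W k ℓ.succ)
    (ZLp : Matrix (Fin L) (Fin n) ℂ) (hpinv : IsMoorePenrose ZL ZLp) :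
    ZH * ZLp = P * Matrix.diagonal x * P⁻¹ ∧
    spectrum ℂ (ZH * ZLp) = Set.range x := by
  obtain ⟨h1, h2, h3, h4⟩ := hpinv
  set Vn : Matrix (Fin n) (Fin L) ℂ := Matrix.of (fun k ℓ => x k ^ (ℓ : ℕ)) with hVn
  have hZL' : ZL = P * Vn := by
    ext k ℓ
    simp [hZL, hW, hVn, Matrix.mul_apply]
  have hZH' : ZH = P * (Matrix.diagonal x * Vn) := by
    have : ZH = P * Matrix.of (fun (k : Fin n) (ℓ : Fin L) => x k ^ ((ℓ : ℕ) + 1)) := by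
      ext k ℓ
      simp [hZH, hW, Matrix.mul_apply]
    rw [this]
    congr 1
    ext k ℓ
    simp [Matrix.diagonal_mul, hVn, pow_succ, mul_comm]
  have hdet : (Matrix.vandermonde x).det ≠ 0 := Matrix.det_vandermonde_ne_zero_iff.mpr hx
  have hVV : Matrix.vandermonde x * (Matrix.vandermonde x)⁻¹ = 1 :=
    Matrix.mul_nonsing_inv _ (isUnit_iff_ne_zero.mpr hdet)
  -- the right inverse of Vn
  set R : Matrix (Fin L) (Fin n) ℂ := Matrix.of (fun (ℓ : Fin L) (i : Fin n) =>
    if h : (ℓ : ℕ) < n then (Matrix.vandermonde x)⁻¹ ⟨ℓ, h⟩ i else 0) with hR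
  have hVR : Vn * R = 1 := by
    ext k i
    rw [Matrix.mul_apply]
    have hsum : ∀ ℓ : Fin L, Vn k ℓ * R ℓ i =
        (fun m : ℕ => if h : m < n then x k ^ m * (Matrix.vandermonde x)⁻¹ ⟨m, h⟩ i else 0) ℓ := by
      intro ℓ
      simp only [hVn, hR, Matrix.of_apply, mul_dite, mul_zero]
    rw [Finset.sum_congr rfl fun ℓ _ => hsum ℓ,
      Fin.sum_univ_eq_sum_range
        (fun m : ℕ => if h : m < n then x k ^ m * (Matrix.vandermonde x)⁻¹ ⟨m, h⟩ i else 0) L]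
    rw [← Finset.sum_subset (Finset.range_subset_range.mpr hL) (fun m _ hm => by
      rw [dif_neg]; simpa using hm)]
    rw [← Fin.sum_univ_eq_sum_range
      (fun m : ℕ => if h : m < n then x k ^ m * (Matrix.vandermonde x)⁻¹ ⟨m, h⟩ i else 0) n]
    have : ∀ j : Fin n, (fun m : ℕ => if h : m < n then
        x k ^ m * (Matrix.vandermonde x)⁻¹ ⟨m, h⟩ i else 0) (j : ℕ)
        = Matrix.vandermonde x k j * (Matrix.vandermonde x)⁻¹ j i := by
      intro j
      simp only []
      rw [dif_pos j.isLt]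
      simp [Matrix.vandermonde_apply]
    rw [Finset.sum_congr rfl fun j _ => this j, ← Matrix.mul_apply, hVV]
  have hPdet : IsUnit P.det := (Matrix.isUnit_iff_isUnit_det P).mp hP
  have hPP : P * P⁻¹ = 1 := Matrix.mul_nonsing_inv P hPdet
  have hZLR : ZL * (R * P⁻¹) = 1 := by
    rw [hZL', Matrix.mul_assoc, ← Matrix.mul_assoc Vn, hVR, Matrix.one_mul, hPP]
  have hZLZLp : ZL * ZLp = 1 := by
    calc ZL * ZLp = ZL * ZLp * (ZL * (R * P⁻¹)) := by rw [hZLR, Matrix.mul_one]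
    _ = (ZL * ZLp * ZL) * (R * P⁻¹) := by rw [Matrix.mul_assoc (ZL * ZLp)]
    _ = ZL * (R * P⁻¹) := by rw [h1]
    _ = 1 := hZLR
  have hVZLp : Vn * ZLp = P⁻¹ := by
    have : P⁻¹ * (ZL * ZLp) = P⁻¹ := by rw [hZLZLp, Matrix.mul_one]
    rw [hZL', Matrix.mul_assoc P, ← Matrix.mul_assoc P⁻¹, Matrix.nonsing_inv_mul P hPdet,
      Matrix.one_mul] at this
    exact this
  have hmain : ZH * ZLp = P * Matrix.diagonal x * P⁻¹ := by
    rw [hZH', Matrix.mul_assoc, Matrix.mul_assoc, hVZLp, ← Matrix.mul_assoc]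
  refine ⟨hmain, ?_⟩
  rw [hmain, ← hP.unit_spec, ← Matrix.coe_units_inv, spectrum.units_conjugate,
    _root_.spectrum_diagonal]
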